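/- Let F be a finite set of reduction operators relative to a well-ordered set (G, <) and suppose F has the Church–Rosser property: for every v ∈ K⟨G⟩ there exist T₁, …, T_r ∈ F with (∧F)(v) = (T_r ∘ ⋯ ∘ T₁)(v). Then F is confluent, i.e., NF(∧F) = ⋂_{T∈F} NF(T). -/

import Mathlib

/-- A reduction operator relative to a well-ordered set `(G, <)`: an idempotent
`K`-linear endomorphism `T` of `G →₀ K` such that `T g ≤ g` for every generator `g`. -/
def IsReductionOperator {K G : Type*} [Field K] [LinearOrder G]
    (T : (G →₀ K) →ₗ[K] (G →₀ K)) : Prop :=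
  T ∘ₗ T = T ∧ ∀ g : G,
    T (Finsupp.single g 1) = Finsupp.single g 1 ∨
      ∀ h ∈ (T (Finsupp.single g 1)).support, h < g

lemma red_supp_le {K G : Type*} [Field K] [LinearOrder G]
    {T : (G →₀ K) →ₗ[K] (G →₀ K)} (hT : IsReductionOperator T) (a : G) :
    ∀ h ∈ (T (Finsupp.single a 1)).support, h ≤ a := by
  rcases hT.2 a with h1 | h1
  · intro h hh
    rw [h1, Finsupp.support_single_ne_zero _ (one_ne_zero)] at hh
    simp at hh
    exact le_of_eq hh
  · exact fun h hh => le_of_lt (h1 h hh)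

lemma red_supp_lt {K G : Type*} [Field K] [LinearOrder G]
    {T : (G →₀ K) →ₗ[K] (G →₀ K)} (hT : IsReductionOperator T) (g : G)
    (w : G →₀ K) (hw : ∀ h ∈ w.support, h < g) :
    ∀ h ∈ (T w).support, h < g := by
  induction w using Finsupp.induction with
  | zero => simp
  | single_add a b f ha hb ih =>
    have hsupp : (Finsupp.single a b + f).support = {a} ∪ f.support := by
      rw [Finsupp.support_add_eq, Finsupp.support_single_ne_zero _ hb]
      rw [Finsupp.support_single_ne_zero _ hb]
      simpa using ha
    have hag : a < g := by
      apply hw; rw [hsupp]; simp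
    have hfw : ∀ h ∈ f.support, h < g := by
      intro h hh; apply hw; rw [hsupp]; simp [hh]
    intro h hh
    have : T (Finsupp.single a b + f) = b • T (Finsupp.single a 1) + T f := by
      rw [map_add]
      congr 1
      rw [← map_smul, Finsupp.smul_single, smul_eq_mul, mul_one]
    rw [this] at hh
    rcases Finset.mem_union.1 (Finsupp.support_add hh) with h1 | h1
    · have := Finsupp.support_smul h1
      exact lt_of_le_of_lt (red_supp_le hT a h this) hag
    · exact ih hfw h h1

/-- A finite set of reduction operators with the Church–Rosser property is confluent. -/
theorem stmt_10 {K G : Type*} [Field K] [LinearOrder G] [WellFoundedLT G]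
    (F : Set ((G →₀ K) →ₗ[K] (G →₀ K))) (hfin : F.Finite) (hne : F.Nonempty)
    (hro : ∀ T ∈ F, IsReductionOperator T)
    (M : (G →₀ K) →ₗ[K] (G →₀ K)) (hM : IsReductionOperator M)
    (hkerM : LinearMap.ker M = ⨆ T ∈ F, LinearMap.ker T)
    (hCR : ∀ v : G →₀ K, ∃ l : List ((G →₀ K) →ₗ[K] (G →₀ K)),
      (∀ T ∈ l, T ∈ F) ∧ M v = l.foldl (fun w T => T w) v) :
    {g : G | M (Finsupp.single g 1) = Finsupp.single g 1} =
      ⋂ T ∈ F, {g : G | T (Finsupp.single g 1) = Finsupp.single g 1} := by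
  ext g
  simp only [Set.mem_setOf_eq, Set.mem_iInter]
  constructor
  · intro hg T hT
    set v : G →₀ K := Finsupp.single g 1 with hv
    -- v - T v ∈ ker T ⊆ ker M
    have hker : v - T v ∈ LinearMap.ker M := by
      rw [hkerM]
      refine le_iSup₂ (f := fun (T : (G →₀ K) →ₗ[K] (G →₀ K)) (_ : T ∈ F) => LinearMap.ker T) T hT ?_
      rw [LinearMap.mem_ker, map_sub]
      have : T (T v) = T v := by
        conv_lhs => rw [show T (T v) = (T ∘ₗ T) v from rfl, (hro T hT).1]
      rw [this, sub_self]
    have hMTv : M (T v) = v := by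
      rw [LinearMap.mem_ker, map_sub, sub_eq_zero] at hker
      rw [← hker, hg]
    by_contra hne'
    rcases (hro T hT).2 g with h1 | h1
    · exact hne' h1
    · have := red_supp_lt hM g (T v) h1 g
      rw [hMTv] at this
      have hg' : g ∈ v.support := by
        rw [hv, Finsupp.support_single_ne_zero _ (one_ne_zero)]; simp
      exact lt_irrefl g (this hg')
  · intro hg
    obtain ⟨l, hl, hfold⟩ := hCR (Finsupp.single g 1)
    rw [hfold]
    clear hfold
    induction l with
    | nil => rfl
    | cons T l ih =>
      simp only [List.foldl_cons]
      rw [hg T (hl T List.mem_cons_self)]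
      exact ih (fun S hS => hl S (List.mem_cons_of_mem T hS))
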